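/- For all real x > -2, it holds that 1 < h(x) < ((x+3)/(x+2))². -/

import Mathlib

open Filter Finset Topology

/-- The Thue–Morse sequence with values `±1`: `u n = (-1)^(s₂ n)` where `s₂ n`
is the sum of the binary digits of `n`. -/
def u (n : ℕ) : ℤ := (-1) ^ (Nat.digits 2 n).sum

lemma u_cases (n : ℕ) : u n = 1 ∨ u n = -1 := by
  rcases Nat.even_or_odd ((Nat.digits 2 n).sum) with h | h
  · left; exact h.neg_one_pow
  · right; exact h.neg_one_pow

lemma u_odd (n : ℕ) : u (2*n+1) = - u (2*n) := by
  rcases Nat.eq_zero_or_pos n with rfl | hn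
  · show u 1 = - u 0
    have h1 : Nat.digits 2 1 = [1] := by
      rw [Nat.digits_def' (by norm_num : 1 < 2) (by norm_num : 0 < 1)]; norm_num
    have h0 : Nat.digits 2 0 = [] := Nat.digits_zero 2
    unfold u; rw [h1, h0]; norm_num
  · have e1 : Nat.digits 2 (2*n+1) = 1 :: Nat.digits 2 n := by
      rw [Nat.digits_def' (by norm_num : 1 < 2) (by omega : 0 < 2*n+1)]
      congr 1
      · omega
      · congr 1; omega
    have e2 : Nat.digits 2 (2*n) = 0 :: Nat.digits 2 n := by
      rw [Nat.digits_def' (by norm_num : 1 < 2) (by omega : 0 < 2*n)]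
      congr 1
      · omega
      · congr 1; omega
    unfold u; rw [e1, e2]
    simp [pow_succ, pow_add]

/-- Partial sums of `u` starting at 1. -/
def A (n : ℕ) : ℤ := ∑ m ∈ Finset.Icc 1 n, u m

lemma A_succ (n : ℕ) : A (n+1) = A n + u (n+1) :=
  Finset.sum_Icc_succ_top (by omega) _

lemma u_one : u 1 = -1 := by
  have h1 : Nat.digits 2 1 = [1] := by
    rw [Nat.digits_def' (by norm_num : 1 < 2) (by norm_num : 0 < 1)]; norm_num
  unfold u; rw [h1]; norm_num

lemma A_parity (n : ℕ) : (Even n → A n = u n - 1) ∧ (Odd n → A n = -1) := by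
  induction n with
  | zero =>
    constructor
    · intro _; show A 0 = u 0 - 1
      have : A 0 = 0 := by simp [A]
      have h0 : u 0 = 1 := by unfold u; simp
      omega
    · intro h; exact absurd h (by simp)
  | succ n ih =>
    constructor
    · intro he1
      have ho : Odd n := Nat.not_even_iff_odd.mp (Nat.even_add_one.mp he1)
      rw [A_succ, ih.2 ho]; ring
    · intro hodd
      have he : Even n := Nat.not_odd_iff_even.mp (Nat.odd_add_one.mp hodd)
      rw [A_succ, ih.1 he]
      have hu : u (n+1) = - u n := by
        obtain ⟨k, hk⟩ := he
        have : n = 2 * k := by omega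
        subst this
        exact u_odd k
      rw [hu]; ring

lemma A_bounds (n : ℕ) : -2 ≤ A n ∧ A n ≤ 0 := by
  rcases Nat.even_or_odd n with he | ho
  · have := (A_parity n).1 he
    rcases u_cases n with h | h <;> omega
  · have := (A_parity n).2 ho
    omega

lemma A_one : A 1 = -1 := (A_parity 1).2 odd_one

/-- If `h x` is, for `x > -2`, the (positive) limit of the partial products
`∏_{n=1}^{N} ((2n+x)/(2n+1+x))^{u_n}`, then `1 < h(x) < ((x+3)/(x+2))²`
for all `x > -2`. -/
theorem stmt_11 (h : ℝ → ℝ)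
    (hh : ∀ x : ℝ, -2 < x →
      Tendsto (fun N : ℕ => ∏ n ∈ Finset.Icc 1 N,
        ((2 * (n : ℝ) + x) / (2 * (n : ℝ) + 1 + x)) ^ (u n)) atTop (𝓝 (h x)))
    (hpos : ∀ x : ℝ, -2 < x → 0 < h x) :
    ∀ x : ℝ, -2 < x → 1 < h x ∧ h x < ((x + 3) / (x + 2)) ^ 2 := by
  intro x hx
  -- positivity facts
  have hden : ∀ n : ℕ, 1 ≤ n → 0 < 2 * (n:ℝ) + x := by
    intro n hn
    have : (1:ℝ) ≤ (n:ℝ) := by exact_mod_cast hn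
    linarith
  have hden' : ∀ n : ℕ, 1 ≤ n → 0 < 2 * (n:ℝ) + 1 + x := by
    intro n hn; linarith [hden n hn]
  set φ : ℕ → ℝ := fun n => Real.log ((2 * (n:ℝ) + x) / (2 * (n:ℝ) + 1 + x)) with hφ
  have hrpos : ∀ n : ℕ, 1 ≤ n → 0 < (2 * (n:ℝ) + x) / (2 * (n:ℝ) + 1 + x) := by
    intro n hn; exact div_pos (hden n hn) (hden' n hn)
  have hφneg : ∀ n : ℕ, 1 ≤ n → φ n < 0 := by
    intro n hn
    apply Real.log_neg (hrpos n hn)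
    rw [div_lt_one (hden' n hn)]; linarith
  have hφmono : ∀ n : ℕ, 1 ≤ n → φ n < φ (n+1) := by
    intro n hn
    apply Real.log_lt_log (hrpos n hn)
    have h1 := hden n hn
    have h2 := hden' n hn
    have h3 : 0 < 2 * ((n:ℝ)+1) + 1 + x := by linarith
    rw [div_lt_div_iff₀ h2 (by push_cast; linarith)]
    push_cast
    nlinarith
  -- φ tends to 0
  have hφ0 : Tendsto φ atTop (𝓝 0) := by
    have h1 : Tendsto (fun n : ℕ => 2 * (n:ℝ) + 1 + x) atTop atTop := by
      apply tendsto_atTop_add_const_right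
      apply tendsto_atTop_add_const_right
      exact (tendsto_natCast_atTop_atTop (R := ℝ)).const_mul_atTop (by norm_num)
    have h2 : Tendsto (fun n : ℕ => (2 * (n:ℝ) + x) / (2 * (n:ℝ) + 1 + x)) atTop (𝓝 1) := by
      have h3 : Tendsto (fun n : ℕ => 1 - (2 * (n:ℝ) + 1 + x)⁻¹) atTop (𝓝 1) := by
        have := h1.inv_tendsto_atTop
        have := (tendsto_const_nhds (x := (1:ℝ)) (f := atTop (α := ℕ))).sub this
        simpa using this
      apply h3.congr'
      filter_upwards [eventually_ge_atTop 1] with n hn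
      have h2 := hden' n hn
      field_simp
      ring
    have hlog : Tendsto Real.log (𝓝 1) (𝓝 0) := by
      have := (Real.continuousAt_log one_ne_zero).tendsto
      simpa using this
    exact hlog.comp h2
  set B : ℕ → ℝ := fun N => ∑ n ∈ Finset.Icc 1 N, (u n : ℝ) * φ n with hB
  -- log of partial products equals B
  have hlogP : ∀ N : ℕ, Real.log (∏ n ∈ Finset.Icc 1 N,
      ((2 * (n : ℝ) + x) / (2 * (n : ℝ) + 1 + x)) ^ (u n)) = B N := by
    intro N
    rw [Real.log_prod]
    · apply Finset.sum_congr rfl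
      intro n hn
      have hn1 : 1 ≤ n := (Finset.mem_Icc.mp hn).1
      rw [Real.log_zpow]
    · intro n hn
      have hn1 : 1 ≤ n := (Finset.mem_Icc.mp hn).1
      exact zpow_ne_zero _ (ne_of_gt (hrpos n hn1))
  -- B tends to log (h x)
  have hBlim : Tendsto B atTop (𝓝 (Real.log (h x))) := by
    have := (Real.continuousAt_log (ne_of_gt (hpos x hx))).tendsto.comp (hh x hx)
    apply this.congr
    intro N
    exact hlogP N
  -- Abel summation identity
  have hAbel : ∀ N : ℕ, B N = (∑ n ∈ Finset.Icc 1 N, (A n : ℝ) * (φ n - φ (n+1)))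
      + (A N : ℝ) * φ (N+1) := by
    intro N
    induction N with
    | zero => simp [hB, A]
    | succ N ih =>
      have hL : B (N+1) = B N + (u (N+1) : ℝ) * φ (N+1) :=
        Finset.sum_Icc_succ_top (by omega) _
      rw [hL, ih, Finset.sum_Icc_succ_top (a := 1) (b := N)
        (f := fun n => (A n : ℝ) * (φ n - φ (n+1))) (by omega)]
      have hAs : ((A (N+1) : ℝ)) = (A N : ℝ) + (u (N+1) : ℝ) := by
        rw [A_succ]; push_cast; ring
      rw [hAs]; ring
  set C : ℕ → ℝ := fun N => ∑ n ∈ Finset.Icc 1 N, (A n : ℝ) * (φ n - φ (n+1)) with hC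
  set δ : ℝ := φ 2 - φ 1 with hδ
  have hφ12 : φ 1 < φ 2 := by
    have := hφmono 1 le_rfl
    norm_num at this
    exact this
  have hδpos : 0 < δ := by simp only [hδ]; linarith
  -- bounds on C
  have hCbound : ∀ N : ℕ, 1 ≤ N → δ ≤ C N ∧ C N ≤ δ + 2 * (φ (N+1) - φ 2) := by
    intro N hN
    induction N with
    | zero => omega
    | succ N ih =>
      rcases Nat.eq_zero_or_pos N with rfl | hN1
      · have hC1 : C 1 = (A 1 : ℝ) * (φ 1 - φ 2) := by
          simp [hC]
        have hA1 : ((A 1 : ℤ) : ℝ) = -1 := by rw [A_one]; norm_num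
        rw [hC1, hA1]
        refine ⟨?_, ?_⟩ <;> simp only [hδ] <;> norm_num <;> linarith
      · have ih' := ih hN1
        have hstep : C (N+1) = C N + (A (N+1) : ℝ) * (φ (N+1) - φ (N+2)) := by
          simp only [hC]
          rw [Finset.sum_Icc_succ_top (a := 1) (b := N)
            (f := fun n => (A n : ℝ) * (φ n - φ (n+1))) (by omega)]
        have hA1 := A_bounds (N+1)
        have hA1l : (-2 : ℝ) ≤ (A (N+1) : ℝ) := by exact_mod_cast hA1.1
        have hA1u : ((A (N+1)) : ℝ) ≤ 0 := by exact_mod_cast hA1.2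
        have hφd : φ (N+1) - φ (N+2) < 0 := by
          have := hφmono (N+1) (by omega)
          linarith
        constructor
        · rw [hstep]
          nlinarith [ih'.1]
        · rw [hstep]
          nlinarith [ih'.2]
  -- error term tends to 0
  have hφsucc : Tendsto (fun N : ℕ => φ (N+1)) atTop (𝓝 0) :=
    hφ0.comp (tendsto_add_atTop_nat 1)
  have hE : Tendsto (fun N : ℕ => (A N : ℝ) * φ (N+1)) atTop (𝓝 0) := by
    apply squeeze_zero
    · intro N
      have hAu : ((A N) : ℝ) ≤ 0 := by exact_mod_cast (A_bounds N).2
      have := hφneg (N+1) (by omega)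
      nlinarith
    · intro N
      show (A N : ℝ) * φ (N+1) ≤ -2 * φ (N+1)
      have hAl : (-2 : ℝ) ≤ (A N : ℝ) := by exact_mod_cast (A_bounds N).1
      have := hφneg (N+1) (by omega)
      nlinarith
    · have := hφsucc.const_mul (-2 : ℝ)
      simpa using this
  -- B N - error = C N tends to log h x
  have hClim : Tendsto C atTop (𝓝 (Real.log (h x))) := by
    have := hBlim.sub hE
    simp only [sub_zero] at this
    apply this.congr
    intro N
    rw [hAbel N]; ring
  -- lower bound: δ ≤ log (h x)
  have hlow : δ ≤ Real.log (h x) := by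
    apply ge_of_tendsto hClim
    filter_upwards [eventually_ge_atTop 1] with N hN
    exact (hCbound N hN).1
  -- upper bound
  have hg : Tendsto (fun N : ℕ => δ + 2 * (φ (N+1) - φ 2)) atTop (𝓝 (δ + 2 * (0 - φ 2))) := by
    apply tendsto_const_nhds.add
    exact (hφsucc.sub_const (φ 2)).const_mul 2
  have hup : Real.log (h x) ≤ δ + 2 * (0 - φ 2) := by
    refine le_of_tendsto_of_tendsto hClim hg ?_
    filter_upwards [eventually_ge_atTop 1] with N hN
    exact (hCbound N hN).2
  have hup' : Real.log (h x) ≤ -(φ 1) - φ 2 := by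
    simp only [hδ] at hup; linarith
  have hlogh : 0 < Real.log (h x) := lt_of_lt_of_le hδpos hlow
  have hhx := hpos x hx
  constructor
  · rw [← Real.exp_log hhx]
    calc (1:ℝ) = Real.exp 0 := Real.exp_zero.symm
    _ < Real.exp (Real.log (h x)) := Real.exp_lt_exp.mpr hlogh
  · have hφ1 : φ 1 = Real.log (x+2) - Real.log (x+3) := by
      have e : (2*((1:ℕ):ℝ) + x)/(2*((1:ℕ):ℝ)+1+x) = (x+2)/(x+3) := by push_cast; ring
      show Real.log ((2*((1:ℕ):ℝ) + x)/(2*((1:ℕ):ℝ)+1+x)) = _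
      rw [e, Real.log_div (by linarith) (by linarith)]
    have hRpos : 0 < ((x+3)/(x+2))^2 :=
      pow_pos (div_pos (by linarith) (by linarith)) 2
    have hlogR : Real.log (((x+3)/(x+2))^2) = -2 * φ 1 := by
      rw [Real.log_pow, Real.log_div (by linarith) (by linarith), hφ1]
      push_cast; ring
    have h2 : Real.log (h x) < Real.log (((x+3)/(x+2))^2) := by
      rw [hlogR]
      linarith
    calc h x = Real.exp (Real.log (h x)) := (Real.exp_log hhx).symm
    _ < Real.exp (Real.log (((x+3)/(x+2))^2)) := Real.exp_lt_exp.mpr h2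
    _ = ((x+3)/(x+2))^2 := Real.exp_log hRpos
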